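/- arXiv:2211.12348 — 2 statements merged into one kernel-verified Lean document; each statement's English description precedes it below -/
import Mathlib

section
/- Let the edges of K_n carry i.i.d. good weights and let W_n be the maximum total weight over all paths from vertex 1 to vertex 2. Then P(W_n > n Λ*⁻¹(log n)) → 0 as n → ∞. -/
open MeasureTheory ProbabilityTheory Real Filter
set_option maxHeartbeats 1000000

noncomputable section

-- Log-moment generating function `Λ`, valued in `EReal` (`⊤` when the exponential
-- moment is infinite).
open Classical in
def lmgf {Ω : Type*} [MeasurableSpace Ω] (μ : Measure Ω) (X : Ω → ℝ) (s : ℝ) : EReal :=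
  if Integrable (fun ω => Real.exp (s * X ω)) μ
  then ((Real.log (∫ ω, Real.exp (s * X ω) ∂μ) : ℝ) : EReal)
  else ⊤

/-- The Legendre transform `Λ*` of the log-moment generating function (rate function). -/
def rateFn {Ω : Type*} [MeasurableSpace Ω] (μ : Measure Ω) (X : Ω → ℝ) (t : ℝ) : EReal :=
  ⨆ s : ℝ, ((s * t : ℝ) : EReal) - lmgf μ X s

/-- The generalised inverse `Λ*⁻¹(t) = inf {s ≥ 0 : Λ*(s) ≥ t}`. -/
def rateFnInv {Ω : Type*} [MeasurableSpace Ω] (μ : Measure Ω) (X : Ω → ℝ) (t : ℝ) : ℝ :=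
  sInf {s : ℝ | 0 ≤ s ∧ (t : EReal) ≤ rateFn μ X s}

/-- `X` is symmetric: `-X` has the same distribution as `X`. -/
def SymmetricRV {Ω : Type*} [MeasurableSpace Ω] (μ : Measure Ω) (X : Ω → ℝ) : Prop :=
  Measure.map X μ = Measure.map (fun ω => -X ω) μ

/-- `Λ` is finite in a neighbourhood of `0`. -/
def FiniteLmgfNearZero {Ω : Type*} [MeasurableSpace Ω] (μ : Measure Ω) (X : Ω → ℝ) : Prop :=
  ∃ δ > (0:ℝ), ∀ s : ℝ, |s| < δ → lmgf μ X s ≠ ⊤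

/-- `X` has regular upper tails: `P(X > t) = exp(-(1+o(1)) Λ*(t))` as `t → ∞`
(vacuous at points where `Λ*(t) = ∞`). -/
def RegularUpperTails {Ω : Type*} [MeasurableSpace Ω] (μ : Measure Ω) (X : Ω → ℝ) : Prop :=
  ∀ ε > (0:ℝ), ∀ᶠ t in atTop, ∀ r : ℝ, rateFn μ X t = (r : EReal) →
    Real.exp (-(1+ε)*r) ≤ (μ {ω | t < X ω}).toReal ∧
    (μ {ω | t < X ω}).toReal ≤ Real.exp (-(1-ε)*r)

/-- A good random variable: symmetric, `Λ` finite near `0`, regular upper tails. -/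
def Good {Ω : Type*} [MeasurableSpace Ω] (μ : Measure Ω) (X : Ω → ℝ) : Prop :=
  SymmetricRV μ X ∧ FiniteLmgfNearZero μ X ∧ RegularUpperTails μ X

/-- The non-diagonal elements of `Sym2 (Fin n)`: the edges of the complete graph `K_n`. -/
abbrev EdgeT (n : ℕ) := {e : Sym2 (Fin n) // ¬ e.IsDiag}


/-- Total weight of a subgraph `G'` of `K_n` with edge weights `x`. -/
def graphWeight {n : ℕ} (x : EdgeT n → ℝ) (G' : SimpleGraph (Fin n)) : ℝ :=
  ∑ e : EdgeT n, Set.indicator {e' : EdgeT n | (e' : Sym2 (Fin n)) ∈ G'.edgeSet} x e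

/-- Total weight of the edges of a walk `p` with edge weights `x`. -/
def walkWeight {n : ℕ} (x : EdgeT n → ℝ) {u v : Fin n}
    (p : (⊤ : SimpleGraph (Fin n)).Walk u v) : ℝ :=
  ∑ e : EdgeT n, Set.indicator {e' : EdgeT n | (e' : Sym2 (Fin n)) ∈ p.edges} x e

end

/-! ### Auxiliary combinatorial lemmas -/

open SimpleGraph in
theorem PUW.walk_ext {V : Type*} {G : SimpleGraph V} {u v : V} (p : G.Walk u v) :
    ∀ (q : G.Walk u v), p.length = q.length → (∀ i, p.getVert i = q.getVert i) → p = q := by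
  induction p with
  | nil =>
    intro q hl _
    have : q.Nil := Walk.nil_iff_length_eq.mpr (by simpa using hl.symm)
    exact this.eq_nil.symm
  | @cons u x v h p ih =>
    intro q hl hv
    have hq : ¬ q.Nil := by
      rw [Walk.not_nil_iff_lt_length, ← hl]; simp
    obtain ⟨y, h', q', rfl⟩ := Walk.not_nil_iff.mp hq
    have hxy : x = y := by
      have := hv 1
      simpa [Walk.getVert_cons_succ, Walk.getVert_zero] using this
    subst hxy
    have : p = q' := ih q' (by simpa using hl)
      (fun i => by simpa [Walk.getVert_cons_succ] using hv (i+1))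
    rw [this]

open SimpleGraph in
theorem PUW.path_getVert_ne_end {V : Type*} {G : SimpleGraph V} {u v : V} {p : G.Walk u v}
    (hp : p.IsPath) : ∀ {i : ℕ}, i < p.length → p.getVert i ≠ v := by
  induction p with
  | nil => intro i hi; simp at hi
  | @cons u x v h p ih =>
    intro i hi
    rcases Walk.cons_isPath_iff _ _ |>.mp hp with ⟨hp', hus⟩
    match i with
    | 0 =>
      simp only [Walk.getVert_zero]
      intro he; exact hus (he ▸ Walk.end_mem_support p)
    | (i+1) =>
      rw [Walk.getVert_cons_succ]
      exact ih hp' (by simpa using hi)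

open SimpleGraph in
theorem PUW.paths_card_le (n : ℕ) :
    Fintype.card {q : (⊤ : SimpleGraph (Fin (n + 2))).Walk 0 1 // q.IsPath} ≤ (n+2)^n := by
  classical
  have key : Function.Injective
      (fun (p : {q : (⊤ : SimpleGraph (Fin (n + 2))).Walk 0 1 // q.IsPath}) (i : Fin n) =>
        (p : (⊤ : SimpleGraph (Fin (n + 2))).Walk 0 1).getVert (i + 1)) := by
    intro p q hf
    have hlen : ∀ (a b : {q : (⊤ : SimpleGraph (Fin (n + 2))).Walk 0 1 // q.IsPath}),
        (fun (i : Fin n) => (a : (⊤ : SimpleGraph (Fin (n + 2))).Walk 0 1).getVert (i + 1)) =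
        (fun (i : Fin n) => (b : (⊤ : SimpleGraph (Fin (n + 2))).Walk 0 1).getVert (i + 1)) →
        ¬ ((a : (⊤ : SimpleGraph (Fin (n + 2))).Walk 0 1).length <
           (b : (⊤ : SimpleGraph (Fin (n + 2))).Walk 0 1).length) := by
      intro a b hab hlt
      set la := (a : (⊤ : SimpleGraph (Fin (n + 2))).Walk 0 1).length with hla
      have ha1 : 1 ≤ la := by
        rcases Nat.eq_zero_or_pos la with h0 | h1
        · exact absurd (Walk.eq_of_length_eq_zero h0) (by simp)
        · exact h1
      have hbub : (b : (⊤ : SimpleGraph (Fin (n + 2))).Walk 0 1).length ≤ n + 1 := by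
        have := b.prop.length_lt; simp at this; omega
      have hi : la - 1 < n := by omega
      have := congrFun hab ⟨la - 1, hi⟩
      simp only at this
      have hidx : (la - 1) + 1 = la := by omega
      rw [hidx] at this
      have hA : (a : (⊤ : SimpleGraph (Fin (n + 2))).Walk 0 1).getVert la = 1 :=
        Walk.getVert_length _
      have hB : (b : (⊤ : SimpleGraph (Fin (n + 2))).Walk 0 1).getVert la ≠ 1 :=
        PUW.path_getVert_ne_end b.prop hlt
      rw [hA] at this
      exact hB this.symm
    have hleq : (p : (⊤ : SimpleGraph (Fin (n + 2))).Walk 0 1).length =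
        (q : (⊤ : SimpleGraph (Fin (n + 2))).Walk 0 1).length := by
      rcases Nat.lt_trichotomy (p : (⊤ : SimpleGraph (Fin (n + 2))).Walk 0 1).length
        (q : (⊤ : SimpleGraph (Fin (n + 2))).Walk 0 1).length with h | h | h
      · exact absurd h (hlen p q hf)
      · exact h
      · exact absurd h (hlen q p hf.symm)
    apply Subtype.ext
    apply PUW.walk_ext _ _ hleq
    intro i
    match i with
    | 0 => simp [Walk.getVert_zero]
    | (i+1) =>
      by_cases hip : i + 1 ≤ n
      · have hin : i < n := by omega
        simpa using congrFun hf ⟨i, hin⟩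
      · have hp1 : (p : (⊤ : SimpleGraph (Fin (n + 2))).Walk 0 1).length ≤ i + 1 := by
          have := p.prop.length_lt; simp at this
          omega
        have hq1 : (q : (⊤ : SimpleGraph (Fin (n + 2))).Walk 0 1).length ≤ i + 1 := by
          have := q.prop.length_lt; simp at this
          omega
        rw [Walk.getVert_of_length_le _ hp1, Walk.getVert_of_length_le _ hq1]
  calc Fintype.card {q : (⊤ : SimpleGraph (Fin (n + 2))).Walk 0 1 // q.IsPath}
      ≤ Fintype.card (Fin n → Fin (n+2)) := Fintype.card_le_of_injective _ key
    _ = (n+2)^n := by simp [Fintype.card_fun]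

open SimpleGraph in
instance PUW.pathsNonempty (n : ℕ) :
    Nonempty {q : (⊤ : SimpleGraph (Fin (n + 2))).Walk 0 1 // q.IsPath} := by
  have hadj : (⊤ : SimpleGraph (Fin (n+2))).Adj 0 1 := by simp
  exact ⟨SimpleGraph.Path.singleton hadj⟩

/-! ### Auxiliary analytic lemmas -/

section AuxAnalytic
variable {Ω₀ : Type*} [MeasurableSpace Ω₀] {μ₀ : Measure Ω₀} [IsProbabilityMeasure μ₀]
  {ξ : Ω₀ → ℝ}

omit [IsProbabilityMeasure μ₀] in
lemma PUW.lmgf_of_integrable {s : ℝ} (h : Integrable (fun ω => Real.exp (s * ξ ω)) μ₀) :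
    lmgf μ₀ ξ s = ((Real.log (mgf ξ μ₀ s) : ℝ) : EReal) := by
  rw [lmgf, if_pos h]; rfl

omit [IsProbabilityMeasure μ₀] in
lemma PUW.lmgf_ne_top_iff {s : ℝ} :
    lmgf μ₀ ξ s ≠ ⊤ ↔ Integrable (fun ω => Real.exp (s * ξ ω)) μ₀ := by
  constructor
  · intro h
    by_contra hint
    rw [lmgf, if_neg hint] at h
    exact h rfl
  · intro h; rw [PUW.lmgf_of_integrable h]; exact EReal.coe_ne_top _

lemma PUW.mgf_one_le (hsym : SymmetricRV μ₀ ξ) (hξ : Measurable ξ) {s : ℝ}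
    (h : Integrable (fun ω => Real.exp (s * ξ ω)) μ₀) : 1 ≤ mgf ξ μ₀ s := by
  have haes : AEStronglyMeasurable (fun x : ℝ => Real.exp (s * x)) (Measure.map ξ μ₀) :=
    (measurable_id.const_mul s).exp.aestronglyMeasurable
  have haes' : AEStronglyMeasurable (fun x : ℝ => Real.exp (s * x))
      (Measure.map (fun ω => -ξ ω) μ₀) :=
    (measurable_id.const_mul s).exp.aestronglyMeasurable
  have h2 : Integrable (fun ω => Real.exp (s * (-ξ ω))) μ₀ := by
    have h1 : Integrable (fun x : ℝ => Real.exp (s * x)) (Measure.map ξ μ₀) :=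
      (integrable_map_measure haes hξ.aemeasurable).mpr h
    rw [hsym] at h1
    have := (integrable_map_measure haes' hξ.neg.aemeasurable).mp h1
    have heq : ((fun x : ℝ => Real.exp (s * x)) ∘ fun ω => -ξ ω) =
        fun ω => Real.exp (s * (-ξ ω)) := rfl
    rwa [heq] at this
  have h1 : ∫ ω, Real.exp (s * ξ ω) ∂μ₀ = ∫ ω, Real.exp (s * (-ξ ω)) ∂μ₀ := by
    rw [← integral_map hξ.aemeasurable haes]
    rw [hsym]
    rw [integral_map (id hξ.neg.aemeasurable : AEMeasurable (fun ω => -ξ ω) μ₀) haes']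
  have h3 : (2:ℝ) ≤ ∫ ω, (Real.exp (s * ξ ω) + Real.exp (s * (-ξ ω))) ∂μ₀ := by
    have hconst : ∫ (_ : Ω₀), (2:ℝ) ∂μ₀ = 2 := by simp
    rw [← hconst]
    refine integral_mono (integrable_const 2) (h.add h2) (fun ω => ?_)
    have hne : s * (-ξ ω) = -(s * ξ ω) := by ring
    rw [hne, Real.exp_neg]
    have hp := Real.exp_pos (s * ξ ω)
    have hinv : Real.exp (s * ξ ω) * (Real.exp (s * ξ ω))⁻¹ = 1 := mul_inv_cancel₀ hp.ne'
    nlinarith [sq_nonneg (Real.exp (s * ξ ω) - 1)]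
  rw [integral_add h h2, ← h1] at h3
  have : mgf ξ μ₀ s = ∫ ω, Real.exp (s * ξ ω) ∂μ₀ := rfl
  linarith [h3, this ▸ le_refl (mgf ξ μ₀ s)]

lemma PUW.lmgf_facts (hsym : SymmetricRV μ₀ ξ) (hξ : Measurable ξ) {s : ℝ}
    (h : lmgf μ₀ ξ s ≠ ⊤) :
    ∃ r : ℝ, 0 ≤ r ∧ lmgf μ₀ ξ s = (r : EReal) ∧ Real.exp r = mgf ξ μ₀ s ∧
      Integrable (fun ω => Real.exp (s * ξ ω)) μ₀ := by
  have hint := PUW.lmgf_ne_top_iff.mp h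
  refine ⟨Real.log (mgf ξ μ₀ s), Real.log_nonneg (PUW.mgf_one_le hsym hξ hint),
    PUW.lmgf_of_integrable hint, Real.exp_log (mgf_pos hint), hint⟩

lemma PUW.lmgf_zero : lmgf μ₀ ξ 0 = 0 := by
  have : Integrable (fun ω => Real.exp (0 * ξ ω)) μ₀ := by
    simpa using integrable_const (1:ℝ)
  rw [lmgf, if_pos this]
  simp

lemma PUW.rateFn_nonneg (t : ℝ) : 0 ≤ rateFn μ₀ ξ t := by
  have h0 : ((0 * t : ℝ) : EReal) - lmgf μ₀ ξ 0 = 0 := by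
    rw [PUW.lmgf_zero]; simp
  calc (0:EReal) = ((0 * t : ℝ) : EReal) - lmgf μ₀ ξ 0 := h0.symm
    _ ≤ rateFn μ₀ ξ t := le_iSup (fun s => ((s * t : ℝ) : EReal) - lmgf μ₀ ξ s) 0

lemma PUW.rateFn_mono (hsym : SymmetricRV μ₀ ξ) (hξ : Measurable ξ) {a b : ℝ}
    (ha : 0 ≤ a) (hab : a ≤ b) : rateFn μ₀ ξ a ≤ rateFn μ₀ ξ b := by
  refine iSup_le fun s => ?_
  by_cases htop : lmgf μ₀ ξ s = ⊤
  · rw [htop]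
    simp
  · obtain ⟨r, hr0, hr, -, -⟩ := PUW.lmgf_facts hsym hξ htop
    rw [hr, ← EReal.coe_sub]
    rcases le_or_gt 0 s with hs | hs
    · refine le_trans ?_ (le_iSup (fun s => ((s * b : ℝ) : EReal) - lmgf μ₀ ξ s) s)
      rw [hr, ← EReal.coe_sub]
      exact_mod_cast by nlinarith
    · refine le_trans ?_ (PUW.rateFn_nonneg b)
      exact_mod_cast (show s * a - r ≤ 0 by nlinarith)

lemma PUW.rateFn_scale (hsym : SymmetricRV μ₀ ξ) (hξ : Measurable ξ) {b rb lam : ℝ}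
    (hb : rateFn μ₀ ξ b = (rb : EReal)) (h0 : 0 ≤ lam) (h1 : lam ≤ 1) :
    rateFn μ₀ ξ (lam * b) ≤ ((lam * rb : ℝ) : EReal) := by
  refine iSup_le fun s => ?_
  by_cases htop : lmgf μ₀ ξ s = ⊤
  · rw [htop]; simp
  · obtain ⟨r, hr0, hr, -, -⟩ := PUW.lmgf_facts hsym hξ htop
    have hsb : s * b - r ≤ rb := by
      have h2 : ((s * b : ℝ) : EReal) - lmgf μ₀ ξ s ≤ (rb : EReal) := by
        rw [← hb]
        exact le_iSup (fun s => ((s * b : ℝ) : EReal) - lmgf μ₀ ξ s) s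
      rw [hr, ← EReal.coe_sub] at h2
      exact_mod_cast h2
    rw [hr, ← EReal.coe_sub]
    have : s * (lam * b) - r ≤ lam * rb := by nlinarith
    exact_mod_cast this

/-- In the degenerate case `Λ*(b) = ⊤`, the upper tail vanishes. -/
lemma PUW.tail_zero_of_rateFn_top (hsym : SymmetricRV μ₀ ξ) (hξ : Measurable ξ) {b : ℝ}
    (hb : 0 < b) (htop : rateFn μ₀ ξ b = ⊤) : μ₀ {ω | b ≤ ξ ω} = 0 := by
  have key : ∀ K : ℝ, 0 ≤ K → (μ₀ {ω | b ≤ ξ ω}).toReal ≤ Real.exp (-K) := by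
    intro K hK
    have hlt : ((K : ℝ) : EReal) < rateFn μ₀ ξ b := by
      rw [htop]; exact EReal.coe_lt_top K
    obtain ⟨s, hs⟩ := lt_iSup_iff.mp hlt
    by_cases hst : lmgf μ₀ ξ s = ⊤
    · rw [hst] at hs; simp at hs
    obtain ⟨r, hr0, hrs, hexp, hint⟩ := PUW.lmgf_facts hsym hξ hst
    rw [hrs, ← EReal.coe_sub] at hs
    have hs' : K < s * b - r := by exact_mod_cast hs
    have hs0 : 0 ≤ s := by
      by_contra hneg
      push_neg at hneg
      nlinarith [mul_neg_of_neg_of_pos hneg hb]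
    have := measure_ge_le_exp_mul_mgf (μ := μ₀) (X := ξ) b hs0 hint
    rw [← hexp, ← Real.exp_add] at this
    calc (μ₀ {ω | b ≤ ξ ω}).toReal ≤ Real.exp (-s * b + r) := this
      _ ≤ Real.exp (-K) := by apply Real.exp_le_exp.mpr; linarith
  by_contra hne
  have hfin : μ₀ {ω | b ≤ ξ ω} ≠ ⊤ := measure_ne_top _ _
  set x := (μ₀ {ω | b ≤ ξ ω}).toReal with hx
  have hxpos : 0 < x :=
    (ENNReal.toReal_pos_iff).mpr ⟨pos_iff_ne_zero.mpr hne, lt_top_iff_ne_top.mpr hfin⟩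
  have hx1 : x ≤ 1 := by
    rw [hx]
    exact ENNReal.toReal_le_of_le_ofReal one_pos.le (by simpa using prob_le_one)
  have hlogx : Real.log x ≤ 0 := Real.log_nonpos hxpos.le hx1
  have := key (1 - Real.log x) (by linarith)
  rw [show -(1 - Real.log x) = Real.log x + (-1) by ring, Real.exp_add,
    Real.exp_log hxpos] at this
  nlinarith [Real.exp_lt_one_iff.mpr (show (-1:ℝ) < 0 by norm_num), Real.exp_pos (-1:ℝ)]

/-- Nonemptiness of the superlevel set of the rate function. -/
lemma PUW.exists_rateFn_ge (hsym : SymmetricRV μ₀ ξ) (hξ : Measurable ξ)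
    (hfin : FiniteLmgfNearZero μ₀ ξ) (hreg : RegularUpperTails μ₀ ξ) {c : ℝ} (hc : 1 < c) :
    ∃ a : ℝ, 0 ≤ a ∧ (c : EReal) ≤ rateFn μ₀ ξ a := by
  obtain ⟨δ, hδ, hfb⟩ := hfin
  set s₀ := δ / 2 with hs₀def
  have hs₀ : 0 < s₀ := by positivity
  have habs : |s₀| < δ := by rw [abs_of_pos hs₀]; simp [hs₀def]; linarith
  obtain ⟨r₀, hr₀0, hr₀, hexp, hint⟩ := PUW.lmgf_facts hsym hξ (hfb s₀ habs)
  obtain ⟨T, hT⟩ := eventually_atTop.mp (hreg 1 one_pos)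
  set a := max T ((r₀ + 2 * c + 1) / s₀) with ha_def
  have ha2 : (r₀ + 2 * c + 1) / s₀ ≤ a := le_max_right _ _
  have ha0 : 0 ≤ a := le_trans (div_nonneg (by linarith) hs₀.le) ha2
  refine ⟨a, ha0, ?_⟩
  by_contra hlt
  push_neg at hlt
  have hne_top : rateFn μ₀ ξ a ≠ ⊤ := ne_top_of_lt hlt
  have hne_bot : rateFn μ₀ ξ a ≠ ⊥ := by
    intro hbot
    have := PUW.rateFn_nonneg (μ₀ := μ₀) (ξ := ξ) a
    rw [hbot] at this
    simp at this
  obtain ⟨ra, hra⟩ : ∃ ra : ℝ, rateFn μ₀ ξ a = (ra : EReal) :=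
    ⟨(rateFn μ₀ ξ a).toReal, (EReal.coe_toReal hne_top hne_bot).symm⟩
  have hra_lt : ra < c := by rw [hra] at hlt; exact_mod_cast hlt
  have htail := (hT a (le_max_left _ _) ra hra).1
  have hmarkov := measure_ge_le_exp_mul_mgf (μ := μ₀) (X := ξ) a hs₀.le hint
  rw [← hexp, ← Real.exp_add] at hmarkov
  have hmono : (μ₀ {ω | a < ξ ω}).toReal ≤ (μ₀ {ω | a ≤ ξ ω}).toReal :=
    ENNReal.toReal_mono (measure_ne_top _ _) (measure_mono (fun ω (h : a < ξ ω) => le_of_lt h))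
  have hsa : r₀ + 2 * c + 1 ≤ s₀ * a := by
    rw [div_le_iff₀ hs₀] at ha2
    linarith [mul_comm a s₀]
  have hchain : Real.exp (-(1+1) * ra) ≤ Real.exp (-s₀ * a + r₀) :=
    le_trans htail (le_trans hmono hmarkov)
  rw [Real.exp_le_exp] at hchain
  linarith

end AuxAnalytic

/-- with i.i.d. good edge weights on the complete graph (here on `n + 2`
vertices), the maximal weight `W` over all paths from vertex `0` to vertex `1` satisfies
`P(W > n Λ*⁻¹(log n)) → 0`. -/
theorem path_upper_whp {Ω₀ : Type*} [MeasurableSpace Ω₀] (μ₀ : Measure Ω₀)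
    [IsProbabilityMeasure μ₀] (ξ : Ω₀ → ℝ) (hξ : Measurable ξ) (hgood : Good μ₀ ξ)
    {Ω : ℕ → Type*} [∀ n, MeasurableSpace (Ω n)] (μ : ∀ n, Measure (Ω n))
    [∀ n, IsProbabilityMeasure (μ n)]
    (X : ∀ n, EdgeT (n + 2) → Ω n → ℝ) (hmeas : ∀ n e, Measurable (X n e))
    (hind : ∀ n, iIndepFun (X n) (μ n))
    (hid : ∀ n e, IdentDistrib (X n e) ξ (μ n) μ₀) :
    Tendsto (fun n : ℕ => μ n {ω |
        ((n + 2 : ℕ) : ℝ) * rateFnInv μ₀ ξ (Real.log ((n + 2 : ℕ) : ℝ)) <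
          ⨆ p : {q : (⊤ : SimpleGraph (Fin (n + 2))).Walk 0 1 // q.IsPath},
            walkWeight (fun e => X n e ω)
              (p : (⊤ : SimpleGraph (Fin (n + 2))).Walk 0 1)}) atTop (nhds 0) := by
  classical
  obtain ⟨hsym, hfin, hreg⟩ := hgood
  -- the event, threshold
  set E : ∀ n : ℕ, Set (Ω n) := fun n => {ω |
        ((n + 2 : ℕ) : ℝ) * rateFnInv μ₀ ξ (Real.log ((n + 2 : ℕ) : ℝ)) <
          ⨆ p : {q : (⊤ : SimpleGraph (Fin (n + 2))).Walk 0 1 // q.IsPath},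
            walkWeight (fun e => X n e ω)
              (p : (⊤ : SimpleGraph (Fin (n + 2))).Walk 0 1)} with hE
  have hsn_nonneg : ∀ n : ℕ, 0 ≤ rateFnInv μ₀ ξ (Real.log ((n + 2 : ℕ) : ℝ)) := by
    intro n
    exact Real.sInf_nonneg (fun x hx => hx.1)
  by_cases hdeg : ∀ b : ℝ, 0 < b → rateFn μ₀ ξ b = ⊤
  · -- degenerate case : ξ = 0 a.s., the event is null for every n
    have hpos0 : μ₀ {ω | 0 < ξ ω} = 0 := by
      have hsub : {ω | 0 < ξ ω} ⊆ ⋃ k : ℕ, {ω | 1/((k:ℝ)+1) ≤ ξ ω} := by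
        intro ω hω
        obtain ⟨k, hk⟩ := exists_nat_one_div_lt (show (0:ℝ) < ξ ω from hω)
        exact Set.mem_iUnion.mpr ⟨k, le_of_lt hk⟩
      refine measure_mono_null hsub (measure_iUnion_null fun k => ?_)
      exact PUW.tail_zero_of_rateFn_top hsym hξ (by positivity) (hdeg _ (by positivity))
    have hneg0 : μ₀ {ω | ξ ω < 0} = 0 := by
      have h1 : μ₀ {ω | ξ ω < 0} = Measure.map ξ μ₀ (Set.Iio 0) := by
        rw [Measure.map_apply hξ measurableSet_Iio]; rfl
      rw [h1, hsym, Measure.map_apply (id hξ.neg : Measurable (fun ω => -ξ ω)) measurableSet_Iio]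
      have : (fun ω => -ξ ω) ⁻¹' (Set.Iio 0) = {ω | 0 < ξ ω} := by
        ext ω; simp
      rw [this, hpos0]
    have hzero : μ₀ {ω | ξ ω ≠ 0} = 0 := by
      have hsub : {ω | ξ ω ≠ 0} ⊆ {ω | ξ ω < 0} ∪ {ω | 0 < ξ ω} := by
        intro ω hω
        rcases lt_or_gt_of_ne hω with h | h
        · exact Or.inl h
        · exact Or.inr h
      exact measure_mono_null hsub (by
        refine le_antisymm ?_ zero_le
        calc μ₀ ({ω | ξ ω < 0} ∪ {ω | 0 < ξ ω}) ≤ _ := measure_union_le _ _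
          _ = 0 := by rw [hneg0, hpos0, add_zero])
    have hEn : ∀ n, μ n (E n) = 0 := by
      intro n
      have hXe : ∀ e : EdgeT (n+2), μ n {ω | X n e ω ≠ 0} = 0 := by
        intro e
        have hms : MeasurableSet ({0}ᶜ : Set ℝ) := (measurableSet_singleton 0).compl
        have h1 : {ω | X n e ω ≠ 0} = X n e ⁻¹' ({0}ᶜ : Set ℝ) := rfl
        have h2 : {ω | ξ ω ≠ 0} = ξ ⁻¹' ({0}ᶜ : Set ℝ) := rfl
        rw [h1, ← Measure.map_apply (hmeas n e) hms, (hid n e).map_eq,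
          Measure.map_apply hξ hms, ← h2, hzero]
      have hU : μ n (⋃ e : EdgeT (n+2), {ω | X n e ω ≠ 0}) = 0 :=
        measure_iUnion_null hXe
      refine measure_mono_null ?_ hU
      intro ω hω
      by_contra hωU
      have hXzero : ∀ e : EdgeT (n+2), X n e ω = 0 := by
        intro e
        by_contra hne
        exact hωU (Set.mem_iUnion.mpr ⟨e, hne⟩)
      have hwW : ∀ p : {q : (⊤ : SimpleGraph (Fin (n + 2))).Walk 0 1 // q.IsPath},
          walkWeight (fun e => X n e ω) (p : (⊤ : SimpleGraph (Fin (n + 2))).Walk 0 1) = 0 := by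
        intro p
        rw [walkWeight]
        refine Finset.sum_eq_zero fun e _ => ?_
        rw [Set.indicator_apply]
        split
        · exact hXzero e
        · rfl
      have hsup : (⨆ p : {q : (⊤ : SimpleGraph (Fin (n + 2))).Walk 0 1 // q.IsPath},
          walkWeight (fun e => X n e ω) (p : (⊤ : SimpleGraph (Fin (n + 2))).Walk 0 1)) = 0 := by
        rw [show (fun p : {q : (⊤ : SimpleGraph (Fin (n + 2))).Walk 0 1 // q.IsPath} =>
          walkWeight (fun e => X n e ω) (p : (⊤ : SimpleGraph (Fin (n + 2))).Walk 0 1)) =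
          fun _ => (0:ℝ) from funext hwW]
        exact ciSup_const
      have hω' : ((n + 2 : ℕ) : ℝ) * rateFnInv μ₀ ξ (Real.log ((n + 2 : ℕ) : ℝ)) <
          ⨆ p : {q : (⊤ : SimpleGraph (Fin (n + 2))).Walk 0 1 // q.IsPath},
            walkWeight (fun e => X n e ω)
              (p : (⊤ : SimpleGraph (Fin (n + 2))).Walk 0 1) := hω
      rw [hsup] at hω'
      have : (0:ℝ) ≤ ((n + 2 : ℕ) : ℝ) * rateFnInv μ₀ ξ (Real.log ((n + 2 : ℕ) : ℝ)) :=
        mul_nonneg (by positivity) (hsn_nonneg n)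
      linarith
    have : (fun n => μ n (E n)) = fun _ => 0 := funext hEn
    rw [this]
    exact tendsto_const_nhds
  · -- main case
    push_neg at hdeg
    obtain ⟨b, hb0, hbne⟩ := hdeg
    have hbne_bot : rateFn μ₀ ξ b ≠ ⊥ := by
      intro hbot
      have := PUW.rateFn_nonneg (μ₀ := μ₀) (ξ := ξ) b
      rw [hbot] at this
      simp at this
    obtain ⟨rb, hrb⟩ : ∃ rb : ℝ, rateFn μ₀ ξ b = (rb : EReal) :=
      ⟨(rateFn μ₀ ξ b).toReal, (EReal.coe_toReal hbne hbne_bot).symm⟩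
    have hrb0 : 0 ≤ rb := by
      have := PUW.rateFn_nonneg (μ₀ := μ₀) (ξ := ξ) b
      rw [hrb] at this
      exact_mod_cast this
    -- the main estimate
    have hbound : ∀ n : ℕ, 1 ≤ n →
        μ n (E n) ≤ ENNReal.ofReal (Real.exp 1 * (((n:ℝ) + 2))⁻¹) := by
      intro n hn
      set Nr : ℝ := ((n + 2 : ℕ) : ℝ) with hNr
      have hNr' : Nr = (n:ℝ) + 2 := by push_cast [hNr]; ring
      have hNr3 : (3:ℝ) ≤ Nr := by
        have h1n : (1:ℝ) ≤ (n:ℝ) := by exact_mod_cast hn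
        rw [hNr']; linarith
      have hNr0 : (0:ℝ) < Nr := by linarith
      set c : ℝ := Real.log Nr with hc_def
      have hc : 1 < c := by
        rw [hc_def, Real.lt_log_iff_exp_lt hNr0]
        calc Real.exp 1 < 2.7182818286 := Real.exp_one_lt_d9
          _ < 3 := by norm_num
          _ ≤ Nr := hNr3
      set S : Set ℝ := {s : ℝ | 0 ≤ s ∧ (c : EReal) ≤ rateFn μ₀ ξ s} with hS_def
      obtain ⟨a0, ha00, ha0c⟩ := PUW.exists_rateFn_ge hsym hξ hfin hreg hc
      have hS_ne : S.Nonempty := ⟨a0, ha00, ha0c⟩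
      have hSbb : BddBelow S := ⟨0, fun x hx => hx.1⟩
      set sn : ℝ := rateFnInv μ₀ ξ c with hsn_def
      have hsn_eq : sn = sInf S := rfl
      have hsn0 : 0 ≤ sn := hsn_nonneg n
      -- positivity of sn
      set lam : ℝ := 1 / (rb + 1) with hlam_def
      have hlam0 : 0 < lam := by positivity
      have hlam1 : lam ≤ 1 := by
        rw [hlam_def, div_le_one (by linarith)]; linarith
      have hlb : ∀ u ∈ S, lam * b ≤ u := by
        intro u hu
        by_contra hul
        push_neg at hul
        have h1 : rateFn μ₀ ξ u ≤ rateFn μ₀ ξ (lam * b) :=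
          PUW.rateFn_mono hsym hξ hu.1 hul.le
        have h2 : rateFn μ₀ ξ (lam * b) ≤ ((lam * rb : ℝ) : EReal) :=
          PUW.rateFn_scale hsym hξ hrb hlam0.le hlam1
        have h3 : (c : EReal) ≤ ((lam * rb : ℝ) : EReal) := le_trans hu.2 (le_trans h1 h2)
        have h4 : c ≤ lam * rb := by exact_mod_cast h3
        have h5 : lam * rb < 1 := by
          rw [hlam_def]
          rw [div_mul_eq_mul_div, div_lt_one (by linarith)]
          linarith
        linarith
      have hsn_pos : 0 < sn := by
        rw [hsn_eq]
        calc (0:ℝ) < lam * b := by positivity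
          _ ≤ sInf S := le_csInf hS_ne hlb
      -- choose u ∈ S slightly above sn
      have hfrac : (1:ℝ) < Nr / ((n:ℝ) + 1) := by
        rw [lt_div_iff₀ (by positivity)]
        rw [hNr']; linarith
      have hlt_sn : sInf S < (Nr / ((n:ℝ) + 1)) * sn := by
        rw [← hsn_eq]
        nlinarith
      obtain ⟨u, huS, hu_lt⟩ := (csInf_lt_iff hSbb hS_ne).mp hlt_sn
      have hu0 : 0 ≤ u := huS.1
      have hu_key : ((n:ℝ) + 1) * u < Nr * sn := by
        rw [div_mul_eq_mul_div, lt_div_iff₀ (by positivity)] at hu_lt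
        nlinarith
      -- choose s via the Legendre supremum at u
      set ε : ℝ := 1 / ((n:ℝ) + 1) with hε_def
      have hε0 : 0 < ε := by positivity
      have hε1 : ε ≤ 1 := by
        rw [hε_def, div_le_one (by positivity)]; linarith [Nat.cast_nonneg (α := ℝ) n]
      have h1 : ((c - ε : ℝ) : EReal) < rateFn μ₀ ξ u := by
        refine lt_of_lt_of_le ?_ huS.2
        exact_mod_cast sub_lt_self c hε0
      obtain ⟨s, hs⟩ := lt_iSup_iff.mp h1
      by_cases hst : lmgf μ₀ ξ s = ⊤
      · rw [hst] at hs; simp at hs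
      obtain ⟨r, hr0, hrs, hexp, hintξ⟩ := PUW.lmgf_facts hsym hξ hst
      rw [hrs, ← EReal.coe_sub] at hs
      have hs' : c - ε < s * u - r := by exact_mod_cast hs
      have hs0 : 0 ≤ s := by
        by_contra hneg
        push_neg at hneg
        nlinarith
      set t : ℝ := Nr * sn with ht_def
      have hkey : ∀ ℓ : ℕ, ℓ ≤ n + 1 → (ℓ:ℝ) * r - s * t ≤ 1 - ((n:ℝ) + 1) * c := by
        intro ℓ hℓ
        have hℓr : (ℓ:ℝ) ≤ (n:ℝ) + 1 := by exact_mod_cast hℓ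
        have h2 : s * (((n:ℝ) + 1) * u) ≤ s * t := by
          apply mul_le_mul_of_nonneg_left _ hs0
          rw [ht_def]; linarith
        have h3 : (ℓ:ℝ) * r ≤ ((n:ℝ)+1) * r := by nlinarith
        have h4 : ((n:ℝ)+1) * (c - ε) ≤ ((n:ℝ)+1) * (s * u - r) := by
          apply mul_le_mul_of_nonneg_left (le_of_lt hs') (by positivity)
        have h5 : ((n:ℝ)+1) * ε = 1 := by
          rw [hε_def]; field_simp
        nlinarith
      -- per-path Chernoff bound
      have hpp : ∀ p : {q : (⊤ : SimpleGraph (Fin (n + 2))).Walk 0 1 // q.IsPath},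
          μ n {ω | t < walkWeight (fun e => X n e ω)
            (p : (⊤ : SimpleGraph (Fin (n + 2))).Walk 0 1)} ≤
          ENNReal.ofReal (Real.exp (1 - ((n:ℝ) + 1) * c)) := by
        intro p
        set F : Finset (EdgeT (n+2)) := Finset.univ.filter
          (fun e : EdgeT (n+2) => (e : Sym2 (Fin (n+2))) ∈
            (p : (⊤ : SimpleGraph (Fin (n + 2))).Walk 0 1).edges) with hF_def
        have hwW : ∀ ω, walkWeight (fun e => X n e ω)
            (p : (⊤ : SimpleGraph (Fin (n + 2))).Walk 0 1) = ∑ e ∈ F, X n e ω := by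
          intro ω
          rw [walkWeight, hF_def, Finset.sum_filter]
          refine Finset.sum_congr rfl fun e _ => ?_
          rw [Set.indicator_apply]
          simp only [Set.mem_setOf_eq]
        have hcard : F.card ≤ n + 1 := by
          have h1 : F.card ≤ (p : (⊤ : SimpleGraph (Fin (n + 2))).Walk 0 1).edges.toFinset.card := by
            refine Finset.card_le_card_of_injOn
              (fun e : EdgeT (n+2) => (e : Sym2 (Fin (n+2)))) (fun e he => ?_)
              (Subtype.val_injective.injOn)
            rw [Finset.mem_coe, List.mem_toFinset]
            exact (Finset.mem_filter.mp (Finset.mem_coe.mp he)).2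
          have h2 : (p : (⊤ : SimpleGraph (Fin (n + 2))).Walk 0 1).edges.toFinset.card ≤
              (p : (⊤ : SimpleGraph (Fin (n + 2))).Walk 0 1).edges.length :=
            (p : (⊤ : SimpleGraph (Fin (n + 2))).Walk 0 1).edges.toFinset_card_le
          have h3 : (p : (⊤ : SimpleGraph (Fin (n + 2))).Walk 0 1).edges.length =
              (p : (⊤ : SimpleGraph (Fin (n + 2))).Walk 0 1).length :=
            SimpleGraph.Walk.length_edges _
          have h4 : (p : (⊤ : SimpleGraph (Fin (n + 2))).Walk 0 1).length ≤ n + 1 := by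
            have := p.prop.length_lt; simp at this; omega
          omega
        have hint_e : ∀ e : EdgeT (n+2),
            Integrable (fun ω => Real.exp (s * X n e ω)) (μ n) := by
          intro e
          have hu_meas : Measurable (fun x : ℝ => Real.exp (s * x)) :=
            (measurable_id.const_mul s).exp
          exact ((hid n e).comp hu_meas).integrable_iff.mpr hintξ
        have hintY : Integrable (fun ω => Real.exp (s * (∑ e ∈ F, X n e) ω)) (μ n) :=
          (hind n).integrable_exp_mul_sum (hmeas n) (fun e _ => hint_e e)
        have hmgf_e : ∀ e : EdgeT (n+2), mgf (X n e) (μ n) s = Real.exp r := by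
          intro e
          have hu_meas : Measurable (fun x : ℝ => Real.exp (s * x)) :=
            (measurable_id.const_mul s).exp
          have := ((hid n e).comp hu_meas).integral_eq
          rw [mgf]
          rw [hexp]
          exact this
        have hchern := measure_ge_le_exp_mul_mgf (μ := μ n) (X := ∑ e ∈ F, X n e) t hs0 hintY
        rw [(hind n).mgf_sum (hmeas n) F] at hchern
        have hprod : (∏ e ∈ F, mgf (X n e) (μ n) s) = Real.exp ((F.card : ℝ) * r) := by
          rw [Finset.prod_congr rfl (fun e _ => hmgf_e e), Finset.prod_const,
            ← Real.exp_nat_mul]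
        rw [hprod, ← Real.exp_add] at hchern
        have hsub : {ω | t < walkWeight (fun e => X n e ω)
            (p : (⊤ : SimpleGraph (Fin (n + 2))).Walk 0 1)} ⊆
            {ω | t ≤ (∑ e ∈ F, X n e) ω} := by
          intro ω hω
          have : t < ∑ e ∈ F, X n e ω := by rw [← hwW ω]; exact hω
          simpa [Finset.sum_apply] using le_of_lt this
        refine le_trans (measure_mono hsub) ?_
        rw [measureReal_def, ← ENNReal.le_ofReal_iff_toReal_le (measure_ne_top _ _) (Real.exp_nonneg _)]
          at hchern
        refine le_trans hchern (ENNReal.ofReal_le_ofReal ?_)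
        rw [Real.exp_le_exp]
        have := hkey F.card hcard
        linarith
      -- union bound
      have hEsub : E n ⊆ ⋃ p : {q : (⊤ : SimpleGraph (Fin (n + 2))).Walk 0 1 // q.IsPath},
          {ω | t < walkWeight (fun e => X n e ω)
            (p : (⊤ : SimpleGraph (Fin (n + 2))).Walk 0 1)} := by
        intro ω hω
        have hω' : t < ⨆ p : {q : (⊤ : SimpleGraph (Fin (n + 2))).Walk 0 1 // q.IsPath},
            walkWeight (fun e => X n e ω)
              (p : (⊤ : SimpleGraph (Fin (n + 2))).Walk 0 1) := hω
        by_contra hωU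
        rw [Set.mem_iUnion] at hωU
        push_neg at hωU
        have : (⨆ p : {q : (⊤ : SimpleGraph (Fin (n + 2))).Walk 0 1 // q.IsPath},
            walkWeight (fun e => X n e ω)
              (p : (⊤ : SimpleGraph (Fin (n + 2))).Walk 0 1)) ≤ t :=
          ciSup_le fun p => not_lt.mp (hωU p)
        linarith
      have hcardP := PUW.paths_card_le n
      calc μ n (E n) ≤ ∑' p : {q : (⊤ : SimpleGraph (Fin (n + 2))).Walk 0 1 // q.IsPath},
            μ n {ω | t < walkWeight (fun e => X n e ω)
              (p : (⊤ : SimpleGraph (Fin (n + 2))).Walk 0 1)} :=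
          le_trans (measure_mono hEsub) (measure_iUnion_le _)
        _ = ∑ p : {q : (⊤ : SimpleGraph (Fin (n + 2))).Walk 0 1 // q.IsPath},
            μ n {ω | t < walkWeight (fun e => X n e ω)
              (p : (⊤ : SimpleGraph (Fin (n + 2))).Walk 0 1)} := tsum_fintype _
        _ ≤ ∑ _p : {q : (⊤ : SimpleGraph (Fin (n + 2))).Walk 0 1 // q.IsPath},
            ENNReal.ofReal (Real.exp (1 - ((n:ℝ) + 1) * c)) :=
          Finset.sum_le_sum (fun p _ => hpp p)
        _ = (Fintype.card {q : (⊤ : SimpleGraph (Fin (n + 2))).Walk 0 1 // q.IsPath} : ENNReal) *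
            ENNReal.ofReal (Real.exp (1 - ((n:ℝ) + 1) * c)) := by
          rw [Finset.sum_const, Finset.card_univ, nsmul_eq_mul]
        _ ≤ (((n+2)^n : ℕ) : ENNReal) * ENNReal.ofReal (Real.exp (1 - ((n:ℝ) + 1) * c)) :=
          mul_le_mul_left (by exact_mod_cast Nat.cast_le.mpr hcardP) _
        _ = ENNReal.ofReal ((((n+2)^n : ℕ) : ℝ) * Real.exp (1 - ((n:ℝ) + 1) * c)) := by
          rw [ENNReal.ofReal_mul (by positivity), ENNReal.ofReal_natCast]
        _ ≤ ENNReal.ofReal (Real.exp 1 * (((n:ℝ) + 2))⁻¹) := by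
          apply ENNReal.ofReal_le_ofReal
          have hNpow : (((n+2)^n : ℕ) : ℝ) = Nr ^ n := by
            rw [hNr']; push_cast; ring
          have hexpc : Real.exp (((n:ℝ) + 1) * c) = Nr ^ (n+1) := by
            have h1 : ((n:ℝ) + 1) = ((n + 1 : ℕ) : ℝ) := by push_cast; ring
            rw [h1, Real.exp_nat_mul, Real.exp_log hNr0]
          have h2 : Real.exp (1 - ((n:ℝ) + 1) * c) =
              Real.exp 1 * (Nr ^ (n+1))⁻¹ := by
            rw [sub_eq_add_neg, Real.exp_add, Real.exp_neg, hexpc]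
          rw [hNpow, h2, ← hNr']
          rw [pow_succ]
          have hNrne : Nr ≠ 0 := ne_of_gt hNr0
          have hNrpne : Nr ^ n ≠ 0 := pow_ne_zero _ hNrne
          field_simp
          exact le_refl _
      -- done
    refine tendsto_of_tendsto_of_tendsto_of_le_of_le'
      (h := fun n : ℕ => ENNReal.ofReal (Real.exp 1 * (((n:ℝ) + 2))⁻¹))
      tendsto_const_nhds ?_ (Eventually.of_forall fun n => zero_le) ?_
    · -- the dominating sequence tends to zero
      have hreal : Tendsto (fun n : ℕ => Real.exp 1 * (((n:ℝ) + 2))⁻¹) atTop (nhds 0) := by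
        have h1 : Tendsto (fun n : ℕ => ((n:ℝ) + 2)) atTop atTop :=
          tendsto_atTop_add_const_right _ 2 tendsto_natCast_atTop_atTop
        have h2 : Tendsto (fun n : ℕ => (((n:ℝ) + 2))⁻¹) atTop (nhds 0) :=
          tendsto_inv_atTop_zero.comp h1
        have := h2.const_mul (Real.exp 1)
        simpa using this
      have h3 := ENNReal.tendsto_ofReal (m := fun n : ℕ => Real.exp 1 * (((n:ℝ) + 2))⁻¹) hreal
      simpa using h3
    · exact eventually_atTop.mpr ⟨1, hbound⟩
end

section
/- Fix sequences 0 = x₀ < x₁ < x₂ < ⋯ with x_n → ∞ and y_n = 2^{n²} for n ≥ 1, y₀ = log 2, chosen so that Σ_n exp(t x_n − y_{n−1}) < ∞ for every t > 0. Let X be the symmetric random variable with P(X > t) = Σ_{n≥0} e^{−y_n} 1_{[x_n, x_{n+1})}(t) for t ≥ 0. Then Λ(t) < ∞ for all t ∈ ℝ, but limsup_{t→∞} (−log P(X > t))/Λ*(t) = +∞; in particular X does not have regular upper tails. -/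
open MeasureTheory ProbabilityTheory Real Filter

/-- a symmetric random variable `X` with `P(X > t) = e^{-y_n}` on
`[x_n, x_{n+1})`, where `y_n = 2^{n²}` grows fast enough, has `Λ(t) < ∞` for all `t` but
`limsup_{t→∞} (-log P(X > t))/Λ*(t) = ∞`; in particular `X` does not have regular upper
tails. -/
theorem no_regular_upper_tails {Ω : Type*} [MeasurableSpace Ω] (μ : Measure Ω)
    [IsProbabilityMeasure μ] (X : Ω → ℝ) (hX : Measurable X)
    (x : ℕ → ℝ) (hx0 : x 0 = 0) (hxmono : StrictMono x) (hxtop : Tendsto x atTop atTop)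
    (y : ℕ → ℝ) (hy0 : y 0 = Real.log 2)
    (hy : ∀ n : ℕ, 1 ≤ n → y n = (2 : ℝ) ^ (n ^ 2))
    (hsum : ∀ t : ℝ, 0 < t → Summable (fun n : ℕ => Real.exp (t * x (n + 1) - y n)))
    (hsym : SymmetricRV μ X)
    (htail : ∀ t : ℝ, 0 ≤ t → ∀ n : ℕ, x n ≤ t → t < x (n + 1) →
      (μ {ω | t < X ω}).toReal = Real.exp (-(y n))) :
    (∀ t : ℝ, lmgf μ X t ≠ ⊤) ∧
    (∀ C : ℝ, 0 < C → ∃ᶠ t in atTop, ∃ r : ℝ, 0 ≤ r ∧ rateFn μ X t ≤ (r : EReal) ∧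
      C * r ≤ -Real.log ((μ {ω | t < X ω}).toReal)) ∧
    ¬ RegularUpperTails μ X := by
  -- Basic positivity facts
  have hx_nonneg : ∀ m, 0 ≤ x m := fun m => hx0 ▸ hxmono.monotone (Nat.zero_le m)
  have hlog2 : Real.log 2 < 1 := by
    have := Real.log_two_lt_d9; linarith
  have hy_pos : ∀ n, 0 < y n := by
    intro n
    rcases Nat.eq_zero_or_pos n with h | h
    · rw [h, hy0]; exact Real.log_pos one_lt_two
    · rw [hy n h]; positivity
  have hy0_le : ∀ n, y 0 ≤ y n := by
    intro n
    rcases Nat.eq_zero_or_pos n with h | h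
    · rw [h]
    · rw [hy n h, hy0]
      have h1 : (1:ℕ) ≤ n^2 := by nlinarith
      have h2 : (2:ℝ)^1 ≤ (2:ℝ)^(n^2) := pow_le_pow_right₀ one_le_two h1
      norm_num at h2
      linarith
  have hykey : ∀ n, 1 ≤ n → y (n+1) = 2^(2*n+1) * y n := by
    intro n hn
    rw [hy (n+1) (by omega), hy n hn, ← pow_add]
    congr 1
    ring
  -- Point values of the tail probabilities
  have hμ : ∀ n : ℕ, μ {ω | x n < X ω} = ENNReal.ofReal (Real.exp (-(y n))) := by
    intro n
    have h := htail (x n) (hx_nonneg n) n le_rfl (hxmono (lt_add_one n))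
    rw [← h, ENNReal.ofReal_toReal (measure_ne_top μ _)]
  have hval : ∀ n : ℕ, (μ {ω | x (n+1) < X ω}).toReal = Real.exp (-(y (n+1))) :=
    fun n => htail _ (hx_nonneg _) (n+1) le_rfl (hxmono (lt_add_one (n+1)))
  -- Integrability of exp(t X) for all t
  have hInt_pos : ∀ t : ℝ, 0 < t → Integrable (fun ω => Real.exp (t * X ω)) μ := by
    intro t ht
    have hmeas : Measurable fun ω => Real.exp (t * X ω) :=
      (Real.measurable_exp.comp (hX.const_mul t))
    refine ⟨hmeas.aestronglyMeasurable, ?_⟩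
    rw [hasFiniteIntegral_iff_ofReal (ae_of_all _ fun ω => (Real.exp_pos _).le)]
    set A : ℕ → Set Ω := fun n => {ω | x n < X ω ∧ X ω ≤ x (n+1)} with hA
    have hAmeas : ∀ n, MeasurableSet (A n) := fun n =>
      ((hX measurableSet_Ioi).inter (hX measurableSet_Iic))
    have hs : MeasurableSet {ω | X ω ≤ 0} := hX measurableSet_Iic
    rw [← lintegral_add_compl _ hs]
    have h1 : ∫⁻ ω in {ω | X ω ≤ 0}, ENNReal.ofReal (Real.exp (t * X ω)) ∂μ ≤ 1 := by
      calc ∫⁻ ω in {ω | X ω ≤ 0}, ENNReal.ofReal (Real.exp (t * X ω)) ∂μ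
          ≤ ∫⁻ _ in {ω | X ω ≤ 0}, 1 ∂μ := by
            refine setLIntegral_mono measurable_const fun ω hω => ?_
            refine ENNReal.ofReal_le_one.mpr ?_
            calc Real.exp (t * X ω) ≤ Real.exp 0 :=
                  Real.exp_le_exp.mpr (mul_nonpos_of_nonneg_of_nonpos ht.le hω)
            _ = 1 := Real.exp_zero
        _ = μ {ω | X ω ≤ 0} := by rw [setLIntegral_const, one_mul]
        _ ≤ 1 := prob_le_one
    have hsub : {ω | X ω ≤ 0}ᶜ ⊆ ⋃ n, A n := by
      intro ω hω
      simp only [Set.mem_compl_iff, Set.mem_setOf_eq, not_le] at hω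
      have hex : ∃ m, X ω ≤ x m := by
        obtain ⟨m, hm⟩ := (hxtop.eventually_ge_atTop (X ω)).exists
        exact ⟨m, hm⟩
      classical
      set m₀ := Nat.find hex with hm₀
      have hm₀spec := Nat.find_spec hex
      have hm₀pos : 0 < m₀ := by
        rcases Nat.eq_zero_or_pos m₀ with h | h
        · exfalso; rw [← hm₀, h, hx0] at hm₀spec; linarith
        · exact h
      refine Set.mem_iUnion.mpr ⟨m₀ - 1, ?_, ?_⟩
      · have := Nat.find_min hex (m := m₀ - 1) (by omega)
        push_neg at this; exact this
      · have : m₀ - 1 + 1 = m₀ := by omega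
        rw [this]; exact hm₀spec
    have hdisj : Pairwise (Function.onFun Disjoint A) := by
      intro m n hmn
      wlog h : m < n generalizing m n
      · exact (this hmn.symm (by omega)).symm
      refine Set.disjoint_left.mpr fun ω hωm hωn => ?_
      have h1 : X ω ≤ x (m+1) := hωm.2
      have h2 : x n < X ω := hωn.1
      have : x (m+1) ≤ x n := hxmono.monotone (by omega)
      linarith
    have h2 : ∫⁻ ω in {ω | X ω ≤ 0}ᶜ, ENNReal.ofReal (Real.exp (t * X ω)) ∂μ
        ≤ ENNReal.ofReal (∑' n, Real.exp (t * x (n+1) - y n)) := by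
      calc ∫⁻ ω in {ω | X ω ≤ 0}ᶜ, ENNReal.ofReal (Real.exp (t * X ω)) ∂μ
          ≤ ∫⁻ ω in ⋃ n, A n, ENNReal.ofReal (Real.exp (t * X ω)) ∂μ :=
            lintegral_mono_set hsub
        _ = ∑' n, ∫⁻ ω in A n, ENNReal.ofReal (Real.exp (t * X ω)) ∂μ :=
            lintegral_iUnion hAmeas hdisj _
        _ ≤ ∑' n, ENNReal.ofReal (Real.exp (t * x (n+1) - y n)) := by
            refine ENNReal.tsum_le_tsum fun n => ?_
            calc ∫⁻ ω in A n, ENNReal.ofReal (Real.exp (t * X ω)) ∂μ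
                ≤ ∫⁻ _ in A n, ENNReal.ofReal (Real.exp (t * x (n+1))) ∂μ := by
                  refine setLIntegral_mono measurable_const fun ω hω => ?_
                  exact ENNReal.ofReal_le_ofReal (Real.exp_le_exp.mpr
                    (mul_le_mul_of_nonneg_left hω.2 ht.le))
              _ = ENNReal.ofReal (Real.exp (t * x (n+1))) * μ (A n) := by
                  rw [setLIntegral_const]
              _ ≤ ENNReal.ofReal (Real.exp (t * x (n+1)))
                    * ENNReal.ofReal (Real.exp (-(y n))) := by
                  refine mul_le_mul_right ?_ _
                  rw [← hμ n]
                  exact measure_mono fun ω hω => hω.1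
              _ = ENNReal.ofReal (Real.exp (t * x (n+1) - y n)) := by
                  rw [← ENNReal.ofReal_mul (Real.exp_pos _).le, ← Real.exp_add]
                  ring_nf
        _ = ENNReal.ofReal (∑' n, Real.exp (t * x (n+1) - y n)) :=
            (ENNReal.ofReal_tsum_of_nonneg (fun n => (Real.exp_pos _).le) (hsum t ht)).symm
    calc _ ≤ (1 : ENNReal) + ENNReal.ofReal (∑' n, Real.exp (t * x (n+1) - y n)) :=
          add_le_add h1 h2
      _ < ⊤ := ENNReal.add_lt_top.mpr ⟨ENNReal.one_lt_top, ENNReal.ofReal_lt_top⟩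
  have hInt : ∀ t : ℝ, Integrable (fun ω => Real.exp (t * X ω)) μ := by
    intro t
    rcases lt_trichotomy t 0 with h | h | h
    · have hg : Measurable fun u : ℝ => Real.exp (-t * u) :=
        Real.measurable_exp.comp (measurable_id.const_mul _)
      have h1 : Integrable (fun ω => Real.exp (-t * X ω)) μ := hInt_pos _ (by linarith)
      have h2 : Integrable (fun u : ℝ => Real.exp (-t * u)) (Measure.map X μ) := by
        rw [integrable_map_measure hg.aestronglyMeasurable hX.aemeasurable]
        exact h1
      rw [hsym, integrable_map_measure hg.aestronglyMeasurable
        ((show Measurable (fun ω => -X ω) from hX.neg).aemeasurable)] at h2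
      have heq : (fun ω => Real.exp (t * X ω))
          = (fun u : ℝ => Real.exp (-t * u)) ∘ (fun ω => -X ω) := by
        funext ω; simp [Function.comp, neg_mul_neg]
      rw [heq]; exact h2
    · rw [h]; simpa using integrable_const (1:ℝ)
    · exact hInt_pos t h
  -- lmgf is always a real number
  have hlmgf : ∀ s : ℝ,
      lmgf μ X s = ((Real.log (∫ ω, Real.exp (s * X ω) ∂μ) : ℝ) : EReal) := by
    intro s
    unfold lmgf
    rw [if_pos (hInt s)]
  -- measure of closed upper tail
  have hclosed : ∀ n, μ {ω | x (n+1) ≤ X ω} = ENNReal.ofReal (Real.exp (-(y n))) := by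
    intro n
    set S : ℕ → Set Ω := fun k => {ω | x (n+1) - 1/(k+1 : ℝ) < X ω} with hS
    have hSmeas : ∀ k, MeasurableSet (S k) := fun k => hX measurableSet_Ioi
    have hanti : Antitone S := by
      intro k l hkl ω hω
      simp only [hS, Set.mem_setOf_eq] at hω ⊢
      have h1 : 1/(l+1 : ℝ) ≤ 1/(k+1 : ℝ) := by
        apply one_div_le_one_div_of_le
        · positivity
        · exact_mod_cast by linarith [(Nat.cast_le (α := ℝ)).mpr hkl]
      linarith
    have hiInter : ⋂ k, S k = {ω | x (n+1) ≤ X ω} := by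
      ext ω
      simp only [Set.mem_iInter, hS, Set.mem_setOf_eq]
      constructor
      · intro h
        by_contra hc
        push_neg at hc
        obtain ⟨k, hk⟩ := exists_nat_one_div_lt (by linarith : 0 < x (n+1) - X ω)
        have := h k
        linarith
      · intro h k
        have : (0:ℝ) < 1/(k+1:ℝ) := by positivity
        linarith
    have htendsto := tendsto_measure_iInter_atTop (μ := μ) (fun k => (hSmeas k).nullMeasurableSet)
      hanti ⟨0, measure_ne_top μ _⟩
    rw [hiInter] at htendsto
    have hconst : ∀ᶠ k in atTop, (μ ∘ S) k = ENNReal.ofReal (Real.exp (-(y n))) := by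
      obtain ⟨K, hK⟩ := exists_nat_one_div_lt (sub_pos.mpr (hxmono (lt_add_one n)))
      filter_upwards [eventually_ge_atTop K] with k hk
      have h1 : 1/(k+1:ℝ) ≤ 1/(K+1:ℝ) := by
        apply one_div_le_one_div_of_le
        · positivity
        · exact_mod_cast by linarith [(Nat.cast_le (α := ℝ)).mpr hk]
      have hxk : x n ≤ x (n+1) - 1/(k+1:ℝ) := by linarith
      have hnonneg : 0 ≤ x (n+1) - 1/(k+1:ℝ) := le_trans (hx_nonneg n) hxk
      have := htail _ hnonneg n hxk (by
        have h2 : (0:ℝ) < 1/(k+1:ℝ) := by positivity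
        linarith [hxmono (lt_add_one n)])
      simp only [Function.comp_apply, hS]
      rw [← this, ENNReal.ofReal_toReal (measure_ne_top μ _)]
    exact tendsto_nhds_unique htendsto
      (Tendsto.congr' (hconst.mono fun k hk => hk.symm) tendsto_const_nhds)
  -- μ(X ≤ 0) ≥ 1/2
  have hhalf : (1:ℝ)/2 ≤ (μ {ω | X ω ≤ 0}).toReal := by
    have h0 : (μ {ω | (0:ℝ) < X ω}).toReal = Real.exp (-(y 0)) := by
      have hb : (0:ℝ) < x 1 := hx0 ▸ hxmono Nat.zero_lt_one
      exact htail 0 le_rfl 0 hx0.le hb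
    have hc : {ω | X ω ≤ 0} = {ω | (0:ℝ) < X ω}ᶜ := by
      ext ω; simp [not_lt]
    have hcm : MeasurableSet {ω | (0:ℝ) < X ω} := hX measurableSet_Ioi
    have := prob_compl_eq_one_sub (μ := μ) hcm
    rw [hc, this, ENNReal.toReal_sub_of_le prob_le_one ENNReal.one_ne_top, h0, hy0,
      Real.exp_neg, Real.exp_log two_pos]
    norm_num
  -- Chernoff bound
  have hcher : ∀ (n : ℕ) (s : ℝ),
      s * x (n+1) - Real.log (∫ ω, Real.exp (s * X ω) ∂μ) ≤ y n := by
    intro n s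
    have hnn : 0 ≤ᶠ[ae μ] fun ω => Real.exp (s * X ω) :=
      ae_of_all _ fun ω => (Real.exp_pos _).le
    rcases le_or_gt 0 s with hs | hs
    · have hSm : MeasurableSet {ω | x (n+1) ≤ X ω} := hX measurableSet_Ici
      have hlow : Real.exp (s * x (n+1)) * Real.exp (-(y n))
          ≤ ∫ ω, Real.exp (s * X ω) ∂μ := by
        calc Real.exp (s * x (n+1)) * Real.exp (-(y n))
            = Real.exp (s * x (n+1)) * (μ {ω | x (n+1) ≤ X ω}).toReal := by
              rw [hclosed n, ENNReal.toReal_ofReal (Real.exp_pos _).le]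
          _ ≤ ∫ ω in {ω | x (n+1) ≤ X ω}, Real.exp (s * X ω) ∂μ := by
              refine setIntegral_ge_of_const_le_real hSm (measure_ne_top μ _) (fun ω hω => ?_)
                ((hInt s).integrableOn)
              exact Real.exp_le_exp.mpr (mul_le_mul_of_nonneg_left hω hs)
          _ ≤ ∫ ω, Real.exp (s * X ω) ∂μ := setIntegral_le_integral (hInt s) hnn
      rw [← Real.exp_add] at hlow
      have hpos : 0 < ∫ ω, Real.exp (s * X ω) ∂μ := lt_of_lt_of_le (Real.exp_pos _) hlow
      have := (Real.le_log_iff_exp_le hpos).mpr hlow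
      linarith
    · have hSm : MeasurableSet {ω | X ω ≤ 0} := hX measurableSet_Iic
      have hlow : (1:ℝ)/2 ≤ ∫ ω, Real.exp (s * X ω) ∂μ := by
        calc (1:ℝ)/2 ≤ 1 * (μ {ω | X ω ≤ 0}).toReal := by rw [one_mul]; exact hhalf
          _ ≤ ∫ ω in {ω | X ω ≤ 0}, Real.exp (s * X ω) ∂μ := by
              refine setIntegral_ge_of_const_le_real hSm (measure_ne_top μ _) (fun ω hω => ?_)
                ((hInt s).integrableOn)
              rw [show (1:ℝ) = Real.exp 0 from Real.exp_zero.symm]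
              have hω' : X ω ≤ 0 := hω
              exact Real.exp_le_exp.mpr (by nlinarith : (0:ℝ) ≤ s * X ω)
          _ ≤ ∫ ω, Real.exp (s * X ω) ∂μ := setIntegral_le_integral (hInt s) hnn
      have hlog : Real.log (1/2) ≤ Real.log (∫ ω, Real.exp (s * X ω) ∂μ) :=
        Real.log_le_log (by norm_num) hlow
      have h12 : Real.log (1/2) = -(y 0) := by
        rw [hy0, one_div, Real.log_inv]
      have hsx : s * x (n+1) ≤ 0 := mul_nonpos_of_nonpos_of_nonneg hs.le (hx_nonneg _)
      have := hy0_le n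
      linarith
  -- rateFn bounds
  have hrate_le : ∀ n : ℕ, rateFn μ X (x (n+1)) ≤ ((y n : ℝ) : EReal) := by
    intro n
    refine iSup_le fun s => ?_
    rw [hlmgf s, ← EReal.coe_sub]
    exact EReal.coe_le_coe_iff.mpr (hcher n s)
  have hrate_nonneg : ∀ t : ℝ, (0 : EReal) ≤ rateFn μ X t := by
    intro t
    have hint1 : (∫ ω, Real.exp (0 * X ω) ∂μ) = 1 := by
      simp [Real.exp_zero]
    have h0 : (((0:ℝ) * t : ℝ) : EReal) - lmgf μ X 0 = (0 : EReal) := by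
      rw [hlmgf 0, hint1, ← EReal.coe_sub]
      norm_num
    calc (0:EReal) = (((0:ℝ) * t : ℝ) : EReal) - lmgf μ X 0 := h0.symm
      _ ≤ ⨆ s : ℝ, ((s * t : ℝ) : EReal) - lmgf μ X s :=
          le_iSup (fun s : ℝ => ((s * t : ℝ) : EReal) - lmgf μ X s) 0
  refine ⟨?_, ?_, ?_⟩
  · intro t
    rw [hlmgf t]
    exact EReal.coe_ne_top _
  · -- frequently: C * r ≤ -log P
    intro C hC
    rw [frequently_atTop]
    intro b
    obtain ⟨N, hN⟩ := eventually_atTop.mp (hxtop.eventually_ge_atTop b)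
    obtain ⟨M, hM⟩ := exists_nat_ge C
    set n := max (max N 1) M with hn
    have hn1 : 1 ≤ n := le_trans (le_max_right N 1) (le_max_left _ _)
    have hnN : N ≤ n := le_trans (le_max_left N 1) (le_max_left _ _)
    have hnM : M ≤ n := le_max_right _ _
    have hxb : b ≤ x (n+1) := hN (n+1) (by omega)
    have hCpow : C ≤ (2:ℝ)^(2*n+1) := by
      have h1 : C ≤ (M:ℝ) := hM
      have h2 : (M:ℝ) ≤ (n:ℝ) := Nat.cast_le.mpr hnM
      have h3 : (n:ℝ) < (2:ℝ)^n := by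
        have := Nat.lt_two_pow_self (n := n)
        exact_mod_cast this
      have h4 : (2:ℝ)^n ≤ (2:ℝ)^(2*n+1) := pow_le_pow_right₀ one_le_two (by omega)
      linarith
    refine ⟨x (n+1), hxb, y n, (hy_pos n).le, hrate_le n, ?_⟩
    rw [hval n, Real.log_exp, neg_neg, hykey n hn1]
    exact mul_le_mul_of_nonneg_right hCpow (hy_pos n).le
  · -- not regular upper tails
    intro hreg
    obtain ⟨b, hb⟩ := eventually_atTop.mp (hreg 1 one_pos)
    obtain ⟨N, hN⟩ := eventually_atTop.mp (hxtop.eventually_ge_atTop b)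
    set n := max N 1 with hn
    have hn1 : 1 ≤ n := le_max_right _ _
    have hxb : b ≤ x (n+1) := hN (n+1) (by omega)
    set v := rateFn μ X (x (n+1)) with hv
    have hv_le : v ≤ ((y n : ℝ) : EReal) := hrate_le n
    have hv0 : (0:EReal) ≤ v := hrate_nonneg _
    have hv_ne_top : v ≠ ⊤ := (lt_of_le_of_lt hv_le (EReal.coe_lt_top _)).ne
    have hv_ne_bot : v ≠ ⊥ := by
      intro h
      rw [h] at hv0
      exact absurd hv0 (by simp)
    set r := v.toReal with hr
    have hvr : v = (r : EReal) := (EReal.coe_toReal hv_ne_top hv_ne_bot).symm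
    have hrle : r ≤ y n := by
      have := EReal.toReal_le_toReal hv_le hv_ne_bot (EReal.coe_ne_top _)
      rwa [EReal.toReal_coe] at this
    have h1 := (hb (x (n+1)) hxb r hvr).1
    rw [hval n] at h1
    have h2 : -(1+1)*r ≤ -(y (n+1)) := Real.exp_le_exp.mp h1
    have h3 : y (n+1) = 2^(2*n+1) * y n := hykey n hn1
    have h4 : (8:ℝ) ≤ 2^(2*n+1) := by
      have : (2:ℝ)^3 ≤ (2:ℝ)^(2*n+1) := pow_le_pow_right₀ one_le_two (by omega)
      norm_num at this
      linarith
    have h5 : 0 < y n := hy_pos n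
    nlinarith
end
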